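/- Let φ = (1+√5)/2 be the golden ratio. For all integers p and q with q ≥ 1, if |qφ − p| ≤ 1, then 1/(q·|qφ − p|) ≤ √5 + 1/q. -/

import Mathlib

/-- Let `φ = (1+√5)/2` be the golden ratio. For all integers `p` and `q ≥ 1`, if
`|qφ - p| ≤ 1`, then `1/(q·|qφ - p|) ≤ √5 + 1/q`. -/
theorem golden_ratio_approx_bound (p q : ℤ) (hq : 1 ≤ q)
    (h : |(q : ℝ) * ((1 + Real.sqrt 5) / 2) - (p : ℝ)| ≤ 1) :
    1 / ((q : ℝ) * |(q : ℝ) * ((1 + Real.sqrt 5) / 2) - (p : ℝ)|) ≤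
      Real.sqrt 5 + 1 / (q : ℝ) := by
  set s := Real.sqrt 5 with hsdef
  have hs2 : s ^ 2 = 5 := Real.sq_sqrt (by norm_num)
  have hs0 : 0 ≤ s := Real.sqrt_nonneg 5
  have hqR : (0:ℝ) < (q:ℝ) := by exact_mod_cast lt_of_lt_of_le zero_lt_one hq
  have hq0 : (q:ℝ) ≠ 0 := ne_of_gt hqR
  have hirr : Irrational s := by
    simpa using (by norm_num : Nat.Prime 5).irrational_sqrt
  set e := (q:ℝ) * ((1 + s) / 2) - (p:ℝ) with hedef
  have hN : e * ((q:ℝ) * ((1 - s) / 2) - (p:ℝ)) = ((p^2 - p*q - q^2 : ℤ) : ℝ) := by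
    push_cast
    rw [hedef]
    linear_combination (-(q:ℝ)^2/4) * hs2
  have hN0 : (p^2 - p*q - q^2 : ℤ) ≠ 0 := by
    intro h0
    have h1 : (s * (q:ℝ))^2 = ((2*p - q : ℤ) : ℝ)^2 := by
      have h1' : (2*p - q)^2 = 5 * q^2 := by linear_combination (4 : ℤ) * h0
      have h1R : ((2*p - q : ℤ) : ℝ)^2 = 5 * (q:ℝ)^2 := by exact_mod_cast h1'
      rw [h1R, mul_pow, hs2]
    have h2 : s * (q:ℝ) = |((2*p - q : ℤ) : ℝ)| := by
      have := (sq_eq_sq_iff_abs_eq_abs _ _).mp h1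
      rwa [abs_of_nonneg (mul_nonneg hs0 hqR.le)] at this
    apply hirr
    refine ⟨((|2*p - q| : ℤ) : ℚ) / ((q : ℤ) : ℚ), ?_⟩
    push_cast
    rw [div_eq_iff hq0]
    rw [← Int.cast_abs] at h2
    push_cast at h2
    linarith [h2]
  -- main argument
  have he0 : e ≠ 0 := by
    intro he
    apply hN0
    have : ((p^2 - p*q - q^2 : ℤ) : ℝ) = 0 := by rw [← hN, he, zero_mul]
    exact_mod_cast this
  have habs : 0 < |e| := abs_pos.mpr he0
  have hone : (1:ℝ) ≤ |((p^2 - p*q - q^2 : ℤ) : ℝ)| := by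
    rw [← Int.cast_abs]
    exact_mod_cast Int.one_le_abs hN0
  have hconj : (q:ℝ) * ((1 - s) / 2) - (p:ℝ) = e - (q:ℝ) * s := by
    rw [hedef]; ring
  have hconj_bound : |(q:ℝ) * ((1 - s) / 2) - (p:ℝ)| ≤ (q:ℝ) * s + 1 := by
    rw [hconj]
    calc |e - (q:ℝ) * s| ≤ |e| + |(q:ℝ) * s| := abs_sub _ _
      _ ≤ 1 + (q:ℝ) * s := by
          rw [abs_of_nonneg (mul_nonneg hqR.le hs0)]
          exact add_le_add_left h _
      _ = (q:ℝ) * s + 1 := by ring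
  have key : 1 ≤ |e| * ((q:ℝ) * s + 1) := by
    calc (1:ℝ) ≤ |((p^2 - p*q - q^2 : ℤ) : ℝ)| := hone
      _ = |e| * |(q:ℝ) * ((1 - s) / 2) - (p:ℝ)| := by rw [← hN, abs_mul]
      _ ≤ |e| * ((q:ℝ) * s + 1) := by
          exact mul_le_mul_of_nonneg_left hconj_bound (abs_nonneg _)
  rw [div_le_iff₀ (mul_pos hqR habs)]
  have : (s + 1 / (q:ℝ)) * ((q:ℝ) * |e|) = |e| * ((q:ℝ) * s + 1) := by
    field_simp
  rw [this]
  exact key
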